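/- Suppose P0, P1 : ℕ → ℝ satisfy the steady-state CME of the generalized ON-OFF model with rate functions K1, K2, K3 : ℕ → ℝ, and set P(n) = P0(n) + P1(n). Let (a_n), (b_n), (c_n), (d_n) be the paper's auxiliary sequences associated with K1, K2, K3. Then for every n ≥ 1, P0(n) = (1/n!)·[−c_n·P(0) + d_n·P0(0)]. -/
import Mathlib


open Finset

/-- Formula (10) of the paper: for solutions of the steady-state CME of the
generalized ON-OFF model, with the paper's auxiliary sequences `a`, `b`, `c`, `d`,
one has `P0(n) = (1/n!)·[−c_n·P(0) + d_n·P0(0)]` for `n ≥ 1`. -/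
theorem cme_P0_formal_expression (K1 K2 K3 P0 P1 P a b c d : ℕ → ℝ)
    (hCME0 : ∀ n : ℕ,
      -K1 n * P0 n + K2 n * P1 n + ((n : ℝ) + 1) * P0 (n + 1) - (n : ℝ) * P0 n = 0)
    (hCME1 : ∀ n : ℕ,
      K1 n * P0 n - K2 n * P1 n + (if n = 0 then 0 else K3 (n - 1) * P1 (n - 1))
        - K3 n * P1 n + ((n : ℝ) + 1) * P1 (n + 1) - (n : ℝ) * P1 n = 0)
    (hP : ∀ n : ℕ, P n = P0 n + P1 n)
    (ha1 : a 1 = K3 0)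
    (haRec : ∀ n : ℕ, 2 ≤ n →
      a n = K3 (n - 1) * a (n - 1)
        + K3 (n - 1) * ∑ i ∈ Finset.Icc 1 (n - 2), K2 i * a i *
            ∏ j ∈ Finset.Icc (i + 1) (n - 2), ((j : ℝ) + K1 j + K2 j)
        + K3 (n - 1) * K2 0 * ∏ i ∈ Finset.Icc 1 (n - 2), ((i : ℝ) + K1 i + K2 i))
    (hb1 : b 1 = K3 0)
    (hbRec : ∀ n : ℕ, 2 ≤ n →
      b n = K3 (n - 1) * b (n - 1)
        + K3 (n - 1) * ∑ i ∈ Finset.Icc 1 (n - 2), K2 i * b i *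
            ∏ j ∈ Finset.Icc (i + 1) (n - 2), ((j : ℝ) + K1 j + K2 j)
        + K3 (n - 1) * ∏ i ∈ Finset.range (n - 1), ((i : ℝ) + K1 i + K2 i))
    (hc : ∀ n : ℕ, 1 ≤ n →
      c n = ∑ i ∈ Finset.Icc 1 (n - 1), K2 i * a i *
            ∏ j ∈ Finset.Icc (i + 1) (n - 1), ((j : ℝ) + K1 j + K2 j)
        + K2 0 * ∏ i ∈ Finset.Icc 1 (n - 1), ((i : ℝ) + K1 i + K2 i))
    (hd : ∀ n : ℕ, 1 ≤ n →
      d n = ∑ i ∈ Finset.Icc 1 (n - 1), K2 i * b i *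
            ∏ j ∈ Finset.Icc (i + 1) (n - 1), ((j : ℝ) + K1 j + K2 j)
        + ∏ i ∈ Finset.range n, ((i : ℝ) + K1 i + K2 i)) :
    ∀ n : ℕ, 1 ≤ n →
      P0 n = (1 / (n.factorial : ℝ)) * (-(c n) * P 0 + d n * P0 0) := by
  -- step recurrence for P0
  have h0 : ∀ n : ℕ, ((n : ℝ) + 1) * P0 (n + 1) = ((n : ℝ) + K1 n) * P0 n - K2 n * P1 n := by
    intro n; linear_combination hCME0 n
  -- telescoped sum equation
  have hPrec : ∀ n : ℕ, ((n : ℝ) + 1) * P (n + 1) = K3 n * P1 n := by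
    intro n
    induction n with
    | zero =>
      have h1 := hCME0 0
      have h2 := hCME1 0
      simp only [if_pos rfl] at h2
      push_cast at h1 h2 ⊢
      linear_combination h1 + h2 + hP 1
    | succ k ih =>
      have h1 := hCME0 (k + 1)
      have h2 := hCME1 (k + 1)
      simp only [Nat.succ_ne_zero, if_false, Nat.add_sub_cancel] at h2
      push_cast at h1 h2 ih ⊢
      linear_combination h1 + h2 + ih + ((k : ℝ) + 2) * hP (k + 1 + 1) - ((k : ℝ) + 1) * hP (k + 1)
  -- recurrences for c and d
  have hcRec : ∀ m : ℕ, c (m + 2)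
      = ((m : ℝ) + 1 + K1 (m + 1) + K2 (m + 1)) * c (m + 1) + K2 (m + 1) * a (m + 1) := by
    intro m
    have h1 := hc (m + 2) (by omega)
    have h2 := hc (m + 1) (by omega)
    rw [show m + 2 - 1 = m + 1 from rfl] at h1
    rw [show m + 1 - 1 = m from rfl] at h2
    rw [Finset.sum_Icc_succ_top (by omega),
      Finset.Icc_eq_empty (show ¬ (m + 1 + 1 ≤ m + 1) by omega), Finset.prod_empty,
      Finset.prod_Icc_succ_top (show 1 ≤ m + 1 by omega)] at h1
    have hsum : ∑ i ∈ Finset.Icc 1 m, K2 i * a i * ∏ j ∈ Finset.Icc (i + 1) (m + 1), ((j : ℝ) + K1 j + K2 j)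
        = (∑ i ∈ Finset.Icc 1 m, K2 i * a i * ∏ j ∈ Finset.Icc (i + 1) m, ((j : ℝ) + K1 j + K2 j))
          * (((m : ℝ) + 1) + K1 (m + 1) + K2 (m + 1)) := by
      rw [Finset.sum_mul]
      refine Finset.sum_congr rfl fun i hi => ?_
      rw [Finset.prod_Icc_succ_top (by simp only [Finset.mem_Icc] at hi; omega)]
      push_cast; ring
    rw [hsum] at h1
    rw [h1, h2]; push_cast; ring
  have hdRec : ∀ m : ℕ, d (m + 2)
      = ((m : ℝ) + 1 + K1 (m + 1) + K2 (m + 1)) * d (m + 1) + K2 (m + 1) * b (m + 1) := by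
    intro m
    have h1 := hd (m + 2) (by omega)
    have h2 := hd (m + 1) (by omega)
    rw [show m + 2 - 1 = m + 1 from rfl] at h1
    rw [show m + 1 - 1 = m from rfl] at h2
    rw [Finset.sum_Icc_succ_top (by omega),
      Finset.Icc_eq_empty (show ¬ (m + 1 + 1 ≤ m + 1) by omega), Finset.prod_empty,
      Finset.prod_range_succ] at h1
    have hsum : ∑ i ∈ Finset.Icc 1 m, K2 i * b i * ∏ j ∈ Finset.Icc (i + 1) (m + 1), ((j : ℝ) + K1 j + K2 j)
        = (∑ i ∈ Finset.Icc 1 m, K2 i * b i * ∏ j ∈ Finset.Icc (i + 1) m, ((j : ℝ) + K1 j + K2 j))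
          * (((m : ℝ) + 1) + K1 (m + 1) + K2 (m + 1)) := by
      rw [Finset.sum_mul]
      refine Finset.sum_congr rfl fun i hi => ?_
      rw [Finset.prod_Icc_succ_top (by simp only [Finset.mem_Icc] at hi; omega)]
      push_cast; ring
    rw [hsum] at h1
    rw [h1, h2]; push_cast; ring
  -- recurrences for a and b
  have haRec' : ∀ m : ℕ, a (m + 2) = K3 (m + 1) * (a (m + 1) + c (m + 1)) := by
    intro m
    have h1 := haRec (m + 2) (by omega)
    have h2 := hc (m + 1) (by omega)
    rw [show m + 2 - 1 = m + 1 from rfl, show m + 2 - 2 = m from rfl] at h1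
    rw [show m + 1 - 1 = m from rfl] at h2
    rw [h1, h2]; ring
  have hbRec' : ∀ m : ℕ, b (m + 2) = K3 (m + 1) * (b (m + 1) + d (m + 1)) := by
    intro m
    have h1 := hbRec (m + 2) (by omega)
    have h2 := hd (m + 1) (by omega)
    rw [show m + 2 - 1 = m + 1 from rfl, show m + 2 - 2 = m from rfl] at h1
    rw [show m + 1 - 1 = m from rfl] at h2
    rw [h1, h2]; ring
  -- main combined induction
  have key : ∀ m : ℕ,
      ((Nat.factorial (m + 1) : ℝ)) * P0 (m + 1) = -(c (m + 1)) * P 0 + d (m + 1) * P0 0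
      ∧ ((Nat.factorial (m + 1) : ℝ)) * P (m + 1) = a (m + 1) * P 0 - b (m + 1) * P0 0 := by
    intro m
    induction m with
    | zero =>
      have hc1 := hc 1 le_rfl
      have hd1 := hd 1 le_rfl
      rw [show (1 : ℕ) - 1 = 0 from rfl] at hc1 hd1
      rw [Finset.Icc_eq_empty (show ¬ (1 ≤ 0) by omega)] at hc1 hd1
      simp only [Finset.sum_empty, Finset.prod_empty, Finset.prod_range_one] at hc1 hd1
      have h1 := h0 0
      have h2 := hPrec 0
      push_cast at h1 h2 hc1 hd1
      constructor
      · rw [show Nat.factorial 1 = 1 from rfl, hc1, hd1, hP 0]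
        push_cast
        linear_combination h1
      · rw [show Nat.factorial 1 = 1 from rfl, ha1, hb1, hP 0]
        push_cast
        linear_combination h2
    | succ k ih =>
      obtain ⟨ihA, ihC⟩ := ih
      have hA := h0 (k + 1)
      have hC := hPrec (k + 1)
      have hP1 : P1 (k + 1) = P (k + 1) - P0 (k + 1) := by rw [hP]; ring
      rw [hP1] at hA hC
      push_cast [Nat.factorial_succ] at hA hC ihA ihC ⊢
      constructor
      · rw [show k + 1 + 1 = k + 2 from rfl, hcRec k, hdRec k]
        linear_combination ((k : ℝ) + 1) * (k.factorial : ℝ) * hA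
          + ((k : ℝ) + 1 + K1 (k + 1) + K2 (k + 1)) * ihA - K2 (k + 1) * ihC
      · rw [show k + 1 + 1 = k + 2 from rfl, haRec' k, hbRec' k]
        linear_combination ((k : ℝ) + 1) * (k.factorial : ℝ) * hC
          + K3 (k + 1) * ihC - K3 (k + 1) * ihA
  intro n hn
  obtain ⟨m, rfl⟩ : ∃ m, n = m + 1 := ⟨n - 1, by omega⟩
  have hF : ((Nat.factorial (m + 1) : ℝ)) ≠ 0 := by
    exact_mod_cast Nat.factorial_ne_zero (m + 1)
  have := (key m).1
  field_simp
  linear_combination this
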